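/- Let Ω be a bounded measurable subset of ℝⁿ, ℓ ≥ 1, s₁,…,s_ℓ ∈ (0,1), p₁,…,p_ℓ ∈ [1,∞). There exists C such that for every measurable u : Ω → ℝ, ∬_{Ω×Ω} |u(x)−u(y)| dx dy ≤ C (1 + ∬_{Ω×Ω} min_{1≤i≤ℓ} |u(x)−u(y)|^{p_i}/|x−y|^{n+s_i p_i} dx dy). -/
import Mathlib

open MeasureTheory Metric Set

theorem stmt_15 (n ℓ : ℕ) (hn : 1 ≤ n) (hℓ : 1 ≤ ℓ)
    (s p : Fin ℓ → ℝ) (hs : ∀ i, s i ∈ Set.Ioo (0:ℝ) 1) (hp : ∀ i, 1 ≤ p i)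
    (Ω : Set (EuclideanSpace ℝ (Fin n))) (hΩ : MeasurableSet Ω)
    (hΩb : Bornology.IsBounded Ω) :
    ∃ C : ℝ, 0 < C ∧
      ∀ u : EuclideanSpace ℝ (Fin n) → ℝ, Measurable u →
        ∫⁻ x in Ω, ∫⁻ y in Ω, ENNReal.ofReal |u x - u y|
          ≤ ENNReal.ofReal C *
            (1 + ∫⁻ x in Ω, ∫⁻ y in Ω,
              ⨅ i, ENNReal.ofReal
                (|u x - u y| ^ p i / ‖x - y‖ ^ ((n : ℝ) + s i * p i))) := by
  haveI : Nonempty (Fin ℓ) := ⟨⟨0, hℓ⟩⟩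
  -- bound Ω
  obtain ⟨M, hM⟩ := hΩb.subset_closedBall 0
  set D : ℝ := max (2 * M) 1 with hD
  have hD1 : (1:ℝ) ≤ D := le_max_right _ _
  have hD0 : (0:ℝ) < D := lt_of_lt_of_le one_pos hD1
  -- distance bound
  have hdist : ∀ x ∈ Ω, ∀ y ∈ Ω, ‖x - y‖ ≤ D := by
    intro x hx y hy
    have hx' := hM hx
    have hy' := hM hy
    simp only [mem_closedBall, dist_zero_right] at hx' hy'
    calc ‖x - y‖ ≤ ‖x‖ + ‖y‖ := norm_sub_le _ _
      _ ≤ M + M := add_le_add hx' hy'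
      _ ≤ D := by rw [hD]; have := le_max_left (2*M) 1; linarith
  -- exponent bound
  set P : ℝ := ∑ i, p i with hP
  have hPi : ∀ i, p i ≤ P := fun i =>
    Finset.single_le_sum (fun j _ => le_trans zero_le_one (hp j)) (Finset.mem_univ i)
  set C₀ : ℝ := D ^ ((n : ℝ) + P) with hC₀
  have hC₀1 : (1:ℝ) ≤ C₀ := Real.one_le_rpow hD1 (by
    have : (1:ℝ) ≤ P := le_trans (hp ⟨0, hℓ⟩) (hPi ⟨0, hℓ⟩)
    positivity)
  have hC₀0 : (0:ℝ) < C₀ := lt_of_lt_of_le one_pos hC₀1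
  -- pointwise real inequality
  have key : ∀ (t r : ℝ), 0 ≤ t → 0 ≤ r → (t ≠ 0 → 0 < r) → r ≤ D → ∀ i,
      t ≤ C₀ * (1 + t ^ p i / r ^ ((n:ℝ) + s i * p i)) := by
    intro t r ht hr0' hr hrD i
    have hfnn : 0 ≤ t ^ p i / r ^ ((n:ℝ) + s i * p i) := by positivity
    rcases le_or_gt t 1 with h1 | h1
    · nlinarith
    · have hr0 : 0 < r := hr (by linarith)
      have he0 : 0 < (n:ℝ) + s i * p i := by
        have := (hs i).1
        have hn' : (1:ℝ) ≤ (n:ℝ) := by exact_mod_cast hn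
        nlinarith [hp i]
      have heP : (n:ℝ) + s i * p i ≤ (n:ℝ) + P := by
        have h1s := (hs i).2
        have := hPi i
        nlinarith [hp i, (hs i).1]
      have hre : r ^ ((n:ℝ) + s i * p i) ≤ C₀ := by
        calc r ^ ((n:ℝ) + s i * p i) ≤ D ^ ((n:ℝ) + s i * p i) :=
              Real.rpow_le_rpow (le_of_lt hr0) hrD (le_of_lt he0)
          _ ≤ C₀ := Real.rpow_le_rpow_of_exponent_le hD1 heP
      have ht' : t ≤ t ^ p i := by
        calc t = t ^ (1:ℝ) := (Real.rpow_one t).symm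
          _ ≤ t ^ p i := Real.rpow_le_rpow_of_exponent_le (le_of_lt h1) (hp i)
      have hrp : 0 < r ^ ((n:ℝ) + s i * p i) := Real.rpow_pos_of_pos hr0 _
      have : t ^ p i = t ^ p i / r ^ ((n:ℝ) + s i * p i) * r ^ ((n:ℝ) + s i * p i) := by
        field_simp
      nlinarith [mul_le_mul_of_nonneg_left hre (le_of_lt (lt_of_le_of_lt (by positivity) hrp)), hfnn,
        mul_le_mul_of_nonneg_left hre hfnn]
  -- pointwise ENNReal inequality
  have keyE : ∀ u : EuclideanSpace ℝ (Fin n) → ℝ, ∀ x ∈ Ω, ∀ y ∈ Ω,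
      ENNReal.ofReal |u x - u y| ≤ ENNReal.ofReal C₀ *
        (1 + ⨅ i, ENNReal.ofReal (|u x - u y| ^ p i / ‖x - y‖ ^ ((n:ℝ) + s i * p i))) := by
    intro u x hx y hy
    set t := |u x - u y| with htdef
    set r := ‖x - y‖ with hrdef
    obtain ⟨i₀, hi₀⟩ := Finite.exists_min
      (fun i => ENNReal.ofReal (t ^ p i / r ^ ((n:ℝ) + s i * p i)))
    have hinf : (⨅ i, ENNReal.ofReal (t ^ p i / r ^ ((n:ℝ) + s i * p i)))
        = ENNReal.ofReal (t ^ p i₀ / r ^ ((n:ℝ) + s i₀ * p i₀)) :=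
      le_antisymm (iInf_le _ _) (le_iInf hi₀)
    rw [hinf]
    have hr : t ≠ 0 → 0 < r := by
      intro ht0
      rcases eq_or_ne x y with rfl | hxy
      · exact absurd (by simp [htdef]) ht0
      · exact norm_sub_pos_iff.mpr hxy
    have h := key t r (abs_nonneg _) (norm_nonneg _) hr (hdist x hx y hy) i₀
    have hfnn : 0 ≤ t ^ p i₀ / r ^ ((n:ℝ) + s i₀ * p i₀) := by positivity
    calc ENNReal.ofReal t ≤ ENNReal.ofReal (C₀ * (1 + t ^ p i₀ / r ^ ((n:ℝ) + s i₀ * p i₀))) :=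
          ENNReal.ofReal_le_ofReal h
      _ = ENNReal.ofReal C₀ * ENNReal.ofReal (1 + t ^ p i₀ / r ^ ((n:ℝ) + s i₀ * p i₀)) :=
          ENNReal.ofReal_mul (le_of_lt hC₀0)
      _ ≤ ENNReal.ofReal C₀ * (1 + ENNReal.ofReal (t ^ p i₀ / r ^ ((n:ℝ) + s i₀ * p i₀))) := by
          gcongr
          rw [ENNReal.ofReal_add zero_le_one hfnn, ENNReal.ofReal_one]
  -- volume bound
  set V : ℝ := (volume (closedBall (0 : EuclideanSpace ℝ (Fin n)) M)).toReal with hV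
  have hvol_ne : volume (closedBall (0 : EuclideanSpace ℝ (Fin n)) M) ≠ ⊤ :=
    (measure_closedBall_lt_top).ne
  have hμΩ : volume Ω ≤ ENNReal.ofReal V := by
    rw [hV, ENNReal.ofReal_toReal hvol_ne]
    exact measure_mono hM
  refine ⟨C₀ * (V * V + 1), by positivity, ?_⟩
  intro u hu
  set G : EuclideanSpace ℝ (Fin n) → EuclideanSpace ℝ (Fin n) → ENNReal :=
    fun x y => ⨅ i, ENNReal.ofReal (|u x - u y| ^ p i / ‖x - y‖ ^ ((n:ℝ) + s i * p i)) with hG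
  set I : ENNReal := ∫⁻ x in Ω, ∫⁻ y in Ω, G x y with hI
  have hcne : ENNReal.ofReal C₀ ≠ ⊤ := ENNReal.ofReal_ne_top
  calc ∫⁻ x in Ω, ∫⁻ y in Ω, ENNReal.ofReal |u x - u y|
      ≤ ∫⁻ x in Ω, ∫⁻ y in Ω, ENNReal.ofReal C₀ * (1 + G x y) := by
        refine setLIntegral_mono' hΩ (fun x hx => ?_)
        exact setLIntegral_mono' hΩ (fun y hy => keyE u x hx y hy)
    _ = ∫⁻ x in Ω, ENNReal.ofReal C₀ * (volume Ω + ∫⁻ y in Ω, G x y) := by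
        refine lintegral_congr (fun x => ?_)
        rw [lintegral_const_mul' _ _ hcne, lintegral_add_left measurable_const,
          setLIntegral_one]
    _ = ENNReal.ofReal C₀ * (volume Ω * volume Ω + I) := by
        rw [lintegral_const_mul' _ _ hcne, lintegral_add_left measurable_const,
          setLIntegral_const, hI]
    _ ≤ ENNReal.ofReal (C₀ * (V * V + 1)) * (1 + I) := by
        rw [ENNReal.ofReal_mul (le_of_lt hC₀0)]
        rw [mul_assoc]
        gcongr
        rw [mul_one_add (ENNReal.ofReal (V*V+1))]
        refine add_le_add ?_ ?_
        · calc volume Ω * volume Ω ≤ ENNReal.ofReal V * ENNReal.ofReal V := by gcongr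
            _ = ENNReal.ofReal (V * V) := (ENNReal.ofReal_mul (ENNReal.toReal_nonneg)).symm
            _ ≤ ENNReal.ofReal (V * V + 1) := ENNReal.ofReal_le_ofReal (by linarith)
        · nth_rewrite 1 [← one_mul I]
          gcongr
          exact ENNReal.one_le_ofReal.mpr (by nlinarith [sq_nonneg V])
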